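/- The Stirling subset triangle (S(n,k))_{n,k≥0} is totally positive: for every r ≥ 1 and all indices n_1 < ⋯ < n_r and k_1 < ⋯ < k_r, the determinant det(S(n_i,k_j))_{1≤i,j≤r} is nonnegative. -/

import Mathlib

/-- The Stirling subset number `S(n,k)`: the number of partitions of an
`n`-element set into exactly `k` nonempty blocks. -/
noncomputable def stirlingSubset (n k : ℕ) : ℕ :=
  Nat.card {P : Finpartition (Finset.univ : Finset (Fin n)) // P.parts.card = k}

open Finset Matrix


section Emb
variable {α β : Type*} [DecidableEq α] [DecidableEq β]


/-- Transport a finpartition of `s` along an embedding. -/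
def pmapEmb (f : α ↪ β) {s : Finset α} (P : Finpartition s) : Finpartition (s.map f) where
  parts := P.parts.image (Finset.map f)
  supIndep := by
    rw [Finset.supIndep_iff_pairwiseDisjoint]
    rintro t ht u hu hne
    simp only [coe_image, Set.mem_image, mem_coe] at ht hu
    obtain ⟨a, ha, rfl⟩ := ht
    obtain ⟨b, hb, rfl⟩ := hu
    have hab : a ≠ b := fun h => hne (by rw [h])
    have := P.disjoint ha hb hab
    simp only [id_eq, Finset.disjoint_left] at this ⊢
    rintro x hx hx'
    simp only [Finset.mem_map] at hx hx'
    obtain ⟨y, hy, rfl⟩ := hx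
    obtain ⟨z, hz, hzy⟩ := hx'
    cases f.injective hzy
    exact this hy hz
  sup_parts := by
    ext x
    rw [Finset.mem_sup]
    simp only [mem_image, id_eq, Finset.mem_map]
    constructor
    · rintro ⟨v, ⟨a, ha, rfl⟩, hx⟩
      simp only [Finset.mem_map] at hx
      obtain ⟨y, hy, rfl⟩ := hx
      exact ⟨y, P.le ha hy, rfl⟩
    · rintro ⟨y, hy, rfl⟩
      obtain ⟨t, ht, hyt⟩ := P.exists_mem hy
      exact ⟨t.map f, ⟨t, ht, rfl⟩, Finset.mem_map_of_mem f hyt⟩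
  bot_notMem := by
    simp only [bot_eq_empty, mem_image]
    rintro ⟨a, ha, h⟩
    have h2 : a = ∅ := Finset.map_eq_empty.mp h
    exact P.bot_notMem (by rw [Finset.bot_eq_empty, ← h2]; exact ha)

lemma pmapEmb_parts_card (f : α ↪ β) {s : Finset α} (P : Finpartition s) :
    (pmapEmb f P).parts.card = P.parts.card :=
  Finset.card_image_of_injective _ (Finset.map_injective f)

lemma pmapEmb_bijective (f : α ↪ β) {s : Finset α} :
    Function.Bijective (pmapEmb f (s := s)) := by
  constructor
  · intro P Q h
    have := congrArg Finpartition.parts h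
    exact Finpartition.ext (Finset.image_injective (Finset.map_injective f) this)
  · intro Q
    have hrange : ∀ t ∈ Q.parts, ∀ x ∈ t, ∃ y ∈ s, f y = x := by
      intro t ht x hx
      have : x ∈ s.map f := Q.le ht hx
      simpa [Finset.mem_map] using this
    classical
    refine ⟨⟨Q.parts.image (fun t => t.preimage ⇑f f.injective.injOn), ?_, ?_, ?_⟩, ?_⟩
    · rw [Finset.supIndep_iff_pairwiseDisjoint]
      rintro t ht u hu hne
      simp only [coe_image, Set.mem_image, mem_coe] at ht hu
      obtain ⟨a, ha, rfl⟩ := ht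
      obtain ⟨b, hb, rfl⟩ := hu
      have hab : a ≠ b := fun h => hne (by rw [h])
      have hd := Q.disjoint ha hb hab
      simp only [id_eq, Finset.disjoint_left] at hd ⊢
      intro x hx hx'
      rw [Finset.mem_preimage] at hx hx'
      exact hd hx hx'
    · ext x
      rw [Finset.mem_sup]
      simp only [mem_image, id_eq]
      constructor
      · rintro ⟨v, ⟨a, ha, rfl⟩, hx⟩
        rw [Finset.mem_preimage] at hx
        have : f x ∈ s.map f := Q.le ha hx
        simp only [Finset.mem_map] at this
        obtain ⟨y, hy, hxy⟩ := this
        cases f.injective hxy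
        exact hy
      · intro hx
        have : f x ∈ s.map f := Finset.mem_map_of_mem f hx
        obtain ⟨t, ht, hxt⟩ := Q.exists_mem this
        exact ⟨t.preimage ⇑f f.injective.injOn, ⟨t, ht, rfl⟩, by rw [Finset.mem_preimage]; exact hxt⟩
    · simp only [bot_eq_empty, mem_image]
      rintro ⟨a, ha, h⟩
      obtain ⟨x, hx⟩ := Q.nonempty_of_mem_parts ha
      obtain ⟨y, _, rfl⟩ := hrange a ha x hx
      exact absurd (h ▸ Finset.mem_preimage.mpr hx : y ∈ (∅ : Finset α)) (Finset.notMem_empty y)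
    · apply Finpartition.ext
      simp only [pmapEmb, Finset.image_image]
      ext t
      simp only [mem_image, Function.comp_apply]
      constructor
      · rintro ⟨a, ha, rfl⟩
        convert ha
        ext x
        simp only [Finset.mem_map, Finset.mem_preimage]
        constructor
        · rintro ⟨y, hy, rfl⟩; exact hy
        · intro hx
          obtain ⟨y, _, rfl⟩ := hrange a ha x hx
          exact ⟨y, hx, rfl⟩
      · intro ht
        refine ⟨t, ht, ?_⟩
        ext x
        simp only [Finset.mem_map, Finset.mem_preimage]
        constructor
        · rintro ⟨y, hy, rfl⟩; exact hy
        · intro hx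
          obtain ⟨y, _, rfl⟩ := hrange t ht x hx
          exact ⟨y, hx, rfl⟩

end Emb

variable {α : Type*} [DecidableEq α] {a : α} {s : Finset α}

section Helpers

/-- Remove the singleton part `{a}` from a partition of `insert a s`. -/
def delPart (ha : a ∉ s) (P : Finpartition (insert a s)) (h : {a} ∈ P.parts) :
    Finpartition s :=
  P.ofSubset (parts := P.parts.erase {a}) (Finset.erase_subset _ _) (by
    ext x
    rw [Finset.mem_sup]
    constructor
    · rintro ⟨t, ht, hx⟩
      simp only [id_eq] at hx
      rw [Finset.mem_erase] at ht
      have hxs : x ∈ insert a s := P.le ht.2 hx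
      rcases Finset.mem_insert.1 hxs with rfl | hxs
      · exact absurd (P.eq_of_mem_parts ht.2 h hx (Finset.mem_singleton_self x)) ht.1
      · exact hxs
    · intro hx
      obtain ⟨t, ht, hxt⟩ := P.exists_mem (Finset.mem_insert_of_mem hx)
      refine ⟨t, Finset.mem_erase.2 ⟨?_, ht⟩, by rw [id_eq]; exact hxt⟩
      rintro rfl
      rw [Finset.mem_singleton] at hxt
      exact ha (hxt ▸ hx))

lemma delPart_parts (ha : a ∉ s) (P : Finpartition (insert a s)) (h : {a} ∈ P.parts) :
    (delPart ha P h).parts = P.parts.erase {a} := rfl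

/-- Facts about the part containing `a` when it is not the singleton. -/
lemma part_erase_nonempty (ha : a ∉ s) (P : Finpartition (insert a s)) (h : {a} ∉ P.parts) :
    ((P.part a).erase a).Nonempty := by
  have hmem : P.part a ∈ P.parts := P.part_mem.2 (Finset.mem_insert_self a s)
  have haa : a ∈ P.part a := P.mem_part (Finset.mem_insert_self a s)
  rw [Finset.nonempty_iff_ne_empty]
  intro he
  have : P.part a ⊆ {a} := by
    intro x hx
    rw [Finset.mem_singleton]
    by_contra hxa
    exact absurd (Finset.mem_erase.2 ⟨hxa, hx⟩) (he ▸ Finset.notMem_empty x)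
  have : P.part a = {a} := Finset.Subset.antisymm this (Finset.singleton_subset_iff.2 haa)
  exact h (this ▸ hmem)

lemma part_erase_not_mem (ha : a ∉ s) (P : Finpartition (insert a s)) (h : {a} ∉ P.parts) :
    (P.part a).erase a ∉ P.parts.erase (P.part a) := by
  intro hmem
  rw [Finset.mem_erase] at hmem
  obtain ⟨x, hx⟩ := part_erase_nonempty ha P h
  have hx' : x ∈ P.part a := Finset.mem_of_mem_erase hx
  exact hmem.1 (P.eq_of_mem_parts hmem.2 (P.part_mem.2 (Finset.mem_insert_self a s)) hx hx')

lemma not_mem_part_of_ne (P : Finpartition (insert a s)) {t : Finset α}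
    (ht : t ∈ P.parts) (hne : t ≠ P.part a) : a ∉ t := fun hat =>
  hne (P.eq_of_mem_parts ht (P.part_mem.2 (Finset.mem_insert_self a s)) hat
    (P.mem_part (Finset.mem_insert_self a s)))

/-- Remove `a` from the (non-singleton) part containing it. -/
def unmark (ha : a ∉ s) (P : Finpartition (insert a s)) (h : {a} ∉ P.parts) :
    Finpartition s where
  parts := insert ((P.part a).erase a) (P.parts.erase (P.part a))
  supIndep := by
    rw [Finset.supIndep_iff_pairwiseDisjoint]
    have hmem : P.part a ∈ P.parts := P.part_mem.2 (Finset.mem_insert_self a s)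
    rintro t ht u hu hne
    simp only [coe_insert, Set.mem_insert_iff, mem_coe, Finset.mem_erase] at ht hu
    rcases ht with rfl | ⟨htne, ht⟩ <;> rcases hu with rfl | ⟨hune, hu⟩
    · exact absurd rfl hne
    · exact Finset.disjoint_of_subset_left (Finset.erase_subset _ _)
        (P.disjoint hmem hu (Ne.symm hune))
    · exact Finset.disjoint_of_subset_right (Finset.erase_subset _ _)
        (P.disjoint ht hmem htne)
    · exact P.disjoint ht hu hne
  sup_parts := by
    ext x
    rw [Finset.mem_sup]
    constructor
    · rintro ⟨t, ht, hx⟩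
      simp only [id_eq] at hx
      rcases Finset.mem_insert.1 ht with rfl | ht
      · rw [Finset.mem_erase] at hx
        have := P.le (P.part_mem.2 (Finset.mem_insert_self a s)) hx.2
        exact (Finset.mem_insert.1 this).resolve_left hx.1
      · rw [Finset.mem_erase] at ht
        have hxs := P.le ht.2 hx
        rcases Finset.mem_insert.1 hxs with rfl | hxs
        · exact absurd (not_mem_part_of_ne P ht.2 ht.1 hx) (fun H => H)
        · exact hxs
    · intro hx
      have hx' : x ∈ insert a s := Finset.mem_insert_of_mem hx
      by_cases hxp : P.part x = P.part a
      · refine ⟨(P.part a).erase a, Finset.mem_insert_self _ _, ?_⟩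
        simp only [id_eq, Finset.mem_erase]
        exact ⟨fun h' => ha (h' ▸ hx), hxp ▸ P.mem_part hx'⟩
      · exact ⟨P.part x, Finset.mem_insert_of_mem (Finset.mem_erase.2 ⟨hxp, P.part_mem.2 hx'⟩),
          by rw [id_eq]; exact P.mem_part hx'⟩
  bot_notMem := by
    rw [Finset.bot_eq_empty, Finset.mem_insert]
    rintro (h' | h')
    · exact absurd (part_erase_nonempty ha P h) (by rw [← h']; simp)
    · exact P.bot_notMem (Finset.mem_of_mem_erase h')

lemma unmark_parts_card (ha : a ∉ s) (P : Finpartition (insert a s)) (h : {a} ∉ P.parts) :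
    (unmark ha P h).parts.card = P.parts.card := by
  have hmem : P.part a ∈ P.parts := P.part_mem.2 (Finset.mem_insert_self a s)
  rw [show (unmark ha P h).parts = insert ((P.part a).erase a) (P.parts.erase (P.part a)) from rfl,
    Finset.card_insert_of_notMem (part_erase_not_mem ha P h),
    Finset.card_erase_of_mem hmem]
  have : 0 < P.parts.card := Finset.card_pos.2 ⟨_, hmem⟩
  omega

/-- Add `a` to the part `B` of a partition of `s`. -/
def mark (ha : a ∉ s) (Q : Finpartition s) {B : Finset α} (hB : B ∈ Q.parts) :
    Finpartition (insert a s) where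
  parts := insert (insert a B) (Q.parts.erase B)
  supIndep := by
    rw [Finset.supIndep_iff_pairwiseDisjoint]
    have hnota : ∀ t ∈ Q.parts, a ∉ t := fun t ht hat => ha (Q.le ht hat)
    rintro t ht u hu hne
    simp only [coe_insert, Set.mem_insert_iff, mem_coe, Finset.mem_erase] at ht hu
    have key : ∀ c ∈ Q.parts, c ≠ B → Disjoint (insert a B) c := by
      intro c hc hcne
      rw [Finset.disjoint_left]
      intro x hx hxc
      rcases Finset.mem_insert.1 hx with rfl | hx
      · exact hnota c hc hxc
      · exact Finset.disjoint_left.1 (Q.disjoint hB hc (Ne.symm hcne)) hx hxc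
    rcases ht with rfl | ⟨htne, ht⟩ <;> rcases hu with rfl | ⟨hune, hu⟩
    · exact absurd rfl hne
    · exact key u hu hune
    · exact (key t ht htne).symm
    · exact Q.disjoint ht hu hne
  sup_parts := by
    ext x
    rw [Finset.mem_sup]
    constructor
    · rintro ⟨t, ht, hx⟩
      simp only [id_eq] at hx
      rcases Finset.mem_insert.1 ht with rfl | ht
      · rcases Finset.mem_insert.1 hx with rfl | hx
        · exact Finset.mem_insert_self x s
        · exact Finset.mem_insert_of_mem (Q.le hB hx)
      · exact Finset.mem_insert_of_mem (Q.le (Finset.mem_of_mem_erase ht) hx)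
    · intro hx
      rcases Finset.mem_insert.1 hx with rfl | hx
      · exact ⟨insert x B, Finset.mem_insert_self _ _, by simp⟩
      · by_cases hxB : Q.part x = B
        · exact ⟨insert a B, Finset.mem_insert_self _ _,
            by simp only [id_eq]; exact Finset.mem_insert_of_mem (hxB ▸ Q.mem_part hx)⟩
        · exact ⟨Q.part x, Finset.mem_insert_of_mem (Finset.mem_erase.2 ⟨hxB, Q.part_mem.2 hx⟩),
            by simp only [id_eq]; exact Q.mem_part hx⟩
  bot_notMem := by
    rw [Finset.bot_eq_empty, Finset.mem_insert]
    rintro (h' | h')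
    · exact absurd h'.symm (Finset.insert_ne_empty a B)
    · exact Q.bot_notMem (Finset.mem_of_mem_erase h')

lemma mark_parts (ha : a ∉ s) (Q : Finpartition s) {B : Finset α} (hB : B ∈ Q.parts) :
    (mark ha Q hB).parts = insert (insert a B) (Q.parts.erase B) := rfl

lemma insertaB_not_mem (ha : a ∉ s) (Q : Finpartition s) {B : Finset α} (hB : B ∈ Q.parts) :
    insert a B ∉ Q.parts := fun h => ha (Q.le h (Finset.mem_insert_self a B))

lemma mark_parts_card (ha : a ∉ s) (Q : Finpartition s) {B : Finset α} (hB : B ∈ Q.parts) :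
    (mark ha Q hB).parts.card = Q.parts.card := by
  rw [mark_parts, Finset.card_insert_of_notMem
    (fun h => insertaB_not_mem ha Q hB (Finset.mem_of_mem_erase h)),
    Finset.card_erase_of_mem hB]
  have : 0 < Q.parts.card := Finset.card_pos.2 ⟨_, hB⟩
  omega

lemma singleton_not_mem_mark (ha : a ∉ s) (Q : Finpartition s) {B : Finset α}
    (hB : B ∈ Q.parts) : {a} ∉ (mark ha Q hB).parts := by
  rw [mark_parts, Finset.mem_insert]
  rintro (h' | h')
  · have haB : a ∉ B := fun h => ha (Q.le hB h)
    obtain ⟨x, hx⟩ := Q.nonempty_of_mem_parts hB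
    have : x ∈ insert a B := Finset.mem_insert_of_mem hx
    rw [← h', Finset.mem_singleton] at this
    exact haB (this ▸ hx)
  · exact ha (Q.le (Finset.mem_of_mem_erase h') (Finset.mem_singleton_self a))

lemma mark_part_a (ha : a ∉ s) (Q : Finpartition s) {B : Finset α} (hB : B ∈ Q.parts) :
    (mark ha Q hB).part a = insert a B :=
  (mark ha Q hB).part_eq_of_mem (by rw [mark_parts]; exact Finset.mem_insert_self _ _)
    (Finset.mem_insert_self a B)

/-- Extend a partition of `s` by the singleton part `{a}`. -/
def extendP (ha : a ∉ s) (Q : Finpartition s) : Finpartition (insert a s) :=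
  Q.extend (by simp) (Finset.disjoint_singleton_right.2 ha)
    (by rw [Finset.sup_eq_union, Finset.union_comm, ← Finset.insert_eq])

lemma extendP_parts (ha : a ∉ s) (Q : Finpartition s) :
    (extendP ha Q).parts = insert {a} Q.parts := rfl

/-- The recurrence bijection for set partitions. -/
def recEquiv (ha : a ∉ s) (k : ℕ) :
    {P : Finpartition (insert a s) // P.parts.card = k + 1} ≃
      {Q : Finpartition s // Q.parts.card = k} ⊕
        (Σ _Q : {Q : Finpartition s // Q.parts.card = k + 1}, {B : Finset α // B ∈ _Q.1.parts}) where
  toFun P :=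
    if h : {a} ∈ P.1.parts then
      Sum.inl ⟨delPart ha P.1 h, by
        rw [delPart_parts, Finset.card_erase_of_mem h, P.2]; omega⟩
    else
      Sum.inr ⟨⟨unmark ha P.1 h, by rw [unmark_parts_card ha P.1 h, P.2]⟩,
        ⟨(P.1.part a).erase a, Finset.mem_insert_self _ _⟩⟩
  invFun x :=
    match x with
    | Sum.inl Q => ⟨extendP ha Q.1, by
        rw [show (extendP ha Q.1).parts = insert {a} Q.1.parts from rfl,
          Finset.card_insert_of_notMem (fun h => ha (Q.1.le h (Finset.mem_singleton_self a))),
          Q.2]⟩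
    | Sum.inr ⟨Q, B⟩ => ⟨mark ha Q.1 B.2, by rw [mark_parts_card ha Q.1 B.2, Q.2]⟩
  left_inv := by
    rintro ⟨P, hP⟩
    by_cases h : {a} ∈ P.parts
    · dsimp only
      rw [dif_pos h]
      apply Subtype.ext
      apply Finpartition.ext
      show insert {a} ((delPart ha P h).parts) = P.parts
      rw [delPart_parts, Finset.insert_erase h]
    · dsimp only
      rw [dif_neg h]
      apply Subtype.ext
      apply Finpartition.ext
      have haP : a ∈ P.part a := P.mem_part (Finset.mem_insert_self a s)
      have hBP : P.part a ∈ P.parts := P.part_mem.2 (Finset.mem_insert_self a s)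
      show insert (insert a ((P.part a).erase a))
          ((unmark ha P h).parts.erase ((P.part a).erase a)) = P.parts
      rw [show (unmark ha P h).parts
            = insert ((P.part a).erase a) (P.parts.erase (P.part a)) from rfl,
        Finset.erase_insert (part_erase_not_mem ha P h),
        Finset.insert_erase haP, Finset.insert_erase hBP]
  right_inv := by
    rintro (⟨Q, hQ⟩ | ⟨⟨Q, hQ⟩, ⟨B, hB⟩⟩)
    · have h : {a} ∈ (extendP ha Q).parts := by
        rw [extendP_parts]; exact Finset.mem_insert_self _ _
      dsimp only
      rw [dif_pos h]
      apply congrArg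
      apply Subtype.ext
      apply Finpartition.ext
      show ((extendP ha Q).parts).erase {a} = Q.parts
      rw [extendP_parts, Finset.erase_insert
        (fun h' => ha (Q.le h' (Finset.mem_singleton_self a)))]
    · have h : {a} ∉ (mark ha Q hB).parts := singleton_not_mem_mark ha Q hB
      have haB : a ∉ B := fun h' => ha (Q.le hB h')
      have hpa : ((mark ha Q hB).part a).erase a = B := by
        rw [mark_part_a ha Q hB, Finset.erase_insert haB]
      have hparts : (unmark ha (mark ha Q hB) h).parts = Q.parts := by
        show insert (((mark ha Q hB).part a).erase a)
          ((mark ha Q hB).parts.erase ((mark ha Q hB).part a)) = Q.parts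
        rw [hpa, mark_part_a ha Q hB, mark_parts, Finset.erase_insert
          (fun h' => insertaB_not_mem ha Q hB (Finset.mem_of_mem_erase h')),
          Finset.insert_erase hB]
      dsimp only
      rw [dif_neg h]
      apply congrArg
      have hQeq : (⟨unmark ha (mark ha Q hB) h, by
          rw [unmark_parts_card ha _ h, mark_parts_card ha Q hB, hQ]⟩ :
          {Q : Finpartition s // Q.parts.card = k + 1}) = ⟨Q, hQ⟩ :=
        Subtype.ext (Finpartition.ext hparts)
      refine Sigma.ext hQeq ((Subtype.heq_iff_coe_eq ?_).2 hpa)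
      intro x
      rw [hparts]

lemma card_partition_insert (ha : a ∉ s) (k : ℕ) :
    Nat.card {P : Finpartition (insert a s) // P.parts.card = k + 1} =
      Nat.card {Q : Finpartition s // Q.parts.card = k} +
        (k + 1) * Nat.card {Q : Finpartition s // Q.parts.card = k + 1} := by
  classical
  rw [Nat.card_congr (recEquiv ha k), Nat.card_sum]
  congr 1
  rw [Nat.card_eq_fintype_card, Fintype.card_sigma]
  have key : ∀ Q : {Q : Finpartition s // Q.parts.card = k + 1},
      Fintype.card {B : Finset α // B ∈ Q.1.parts} = k + 1 := fun Q => by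
    rw [Fintype.card_eq_nat_card, Nat.card_eq_finsetCard, Q.2]
  calc (∑ Q : {Q : Finpartition s // Q.parts.card = k + 1}, Fintype.card {B : Finset α // B ∈ Q.1.parts}) = ∑ _Q : {Q : Finpartition s // Q.parts.card = k + 1}, (k+1) := Finset.sum_congr rfl (fun Q _ => key Q)
    _ = (k + 1) * Nat.card {Q : Finpartition s // Q.parts.card = k + 1} := by
      rw [Finset.sum_const, Finset.card_univ, smul_eq_mul, Nat.card_eq_fintype_card, mul_comm]


lemma card_subtype_pmap (f : α ↪ β) [DecidableEq β] (s : Finset α) (k : ℕ) :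
    Nat.card {P : Finpartition (s.map f) // P.parts.card = k} =
      Nat.card {P : Finpartition s // P.parts.card = k} := by
  refine (Nat.card_congr (Equiv.ofBijective
    (fun P : {P : Finpartition s // P.parts.card = k} =>
      (⟨pmapEmb f P.1, by rw [pmapEmb_parts_card]; exact P.2⟩ :
        {P : Finpartition (s.map f) // P.parts.card = k})) ⟨?_, ?_⟩)).symm
  · intro P Q h
    exact Subtype.ext ((pmapEmb_bijective f).1 (congrArg Subtype.val h))
  · intro Q
    obtain ⟨P, hP⟩ := (pmapEmb_bijective f).2 Q.1
    exact ⟨⟨P, by rw [← pmapEmb_parts_card f P, hP]; exact Q.2⟩, Subtype.ext hP⟩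

lemma stirling_eq_Iio (n k : ℕ) :
    stirlingSubset n k
      = Nat.card {P : Finpartition (Finset.Iio n : Finset ℕ) // P.parts.card = k} := by
  have := card_subtype_pmap (Fin.valEmbedding) (Finset.univ : Finset (Fin n)) k
  rw [Fin.map_valEmbedding_univ] at this
  exact this.symm

lemma stirling_succ_succ (n k : ℕ) :
    stirlingSubset (n + 1) (k + 1) =
      stirlingSubset n k + (k + 1) * stirlingSubset n (k + 1) := by
  rw [stirling_eq_Iio, stirling_eq_Iio, stirling_eq_Iio]
  have h1 : (Finset.Iio (n + 1) : Finset ℕ) = insert n (Finset.Iio n) := by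
    ext x; simp only [Finset.mem_Iio, Finset.mem_insert]; omega
  rw [h1]
  exact card_partition_insert (by simp) k

lemma parts_eq_empty_fin_zero (P : Finpartition (Finset.univ : Finset (Fin 0))) :
    P.parts = ∅ :=
  Finset.eq_empty_iff_forall_notMem.2 fun t ht =>
    (P.nonempty_of_mem_parts ht).elim fun x _ => x.elim0

lemma stirling_zero_zero : stirlingSubset 0 0 = 1 := by
  have : Unique {P : Finpartition (Finset.univ : Finset (Fin 0)) // P.parts.card = 0} := by
    refine ⟨⟨⟨⊥, by rw [Finpartition.card_bot]; rfl⟩⟩, ?_⟩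
    rintro ⟨P, hP⟩
    apply Subtype.ext
    apply Finpartition.ext
    rw [parts_eq_empty_fin_zero P, parts_eq_empty_fin_zero]
  exact Nat.card_unique

lemma stirling_zero_succ (k : ℕ) : stirlingSubset 0 (k + 1) = 0 := by
  have : IsEmpty {P : Finpartition (Finset.univ : Finset (Fin 0)) // P.parts.card = k + 1} := by
    refine ⟨fun P => ?_⟩
    have := P.2
    rw [parts_eq_empty_fin_zero P.1] at this
    simp at this
  exact Nat.card_of_isEmpty

lemma stirling_succ_zero (n : ℕ) : stirlingSubset (n + 1) 0 = 0 := by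
  have : IsEmpty {P : Finpartition (Finset.univ : Finset (Fin (n + 1))) // P.parts.card = 0} := by
    refine ⟨fun P => ?_⟩
    have h0 := P.2
    rw [Finset.card_eq_zero] at h0
    have := P.1.sup_parts
    rw [h0] at this
    simp only [Finset.sup_empty] at this
    have h1 : (0 : Fin (n + 1)) ∈ (Finset.univ : Finset (Fin (n + 1))) := Finset.mem_univ _
    rw [← this] at h1
    simp at h1
  exact Nat.card_of_isEmpty

lemma stirling_pos_zero {n : ℕ} (hn : 1 ≤ n) : stirlingSubset n 0 = 0 := by
  obtain ⟨m, rfl⟩ := Nat.exists_eq_add_of_le hn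
  rw [show 1 + m = m + 1 by omega]
  exact stirling_succ_zero m

lemma stirling_rec {n k : ℕ} (hn : 1 ≤ n) (hk : 1 ≤ k) :
    stirlingSubset n k = stirlingSubset (n - 1) (k - 1) + k * stirlingSubset (n - 1) k := by
  obtain ⟨m, rfl⟩ := Nat.exists_eq_add_of_le hn
  obtain ⟨l, rfl⟩ := Nat.exists_eq_add_of_le hk
  rw [show 1 + m = m + 1 by omega, show 1 + l = l + 1 by omega]
  simpa using stirling_succ_succ m l

local notation "S" => stirlingSubset


lemma stirling_zero_pos {k : ℕ} (hk : 1 ≤ k) : stirlingSubset 0 k = 0 := by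
  obtain ⟨l, rfl⟩ := Nat.exists_eq_add_of_le hk
  rw [show 1 + l = l + 1 by omega]
  exact stirling_zero_succ l

lemma stirling_minor_nonneg : ∀ (μ r : ℕ) (row col : Fin r → ℕ), StrictMono row →
    StrictMono col → r + ∑ i, row i ≤ μ →
    0 ≤ Matrix.det (Matrix.of fun i j : Fin r => (S (row i) (col j) : ℝ)) := by
  intro μ
  induction μ with
  | zero =>
    intro r row col _ _ h
    have hr : r = 0 := by omega
    subst hr
    simp [Matrix.det_fin_zero]
  | succ μ ih =>
    intro r row col hrow hcol hμ
    match r, row, col, hrow, hcol, hμ with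
    | 0, row, col, hrow, hcol, hμ => simp [Matrix.det_fin_zero]
    | r' + 1, row, col, hrow, hcol, hμ =>
      by_cases h0 : row 0 = 0
      · by_cases hc0 : col 0 = 0
        · -- expand along the first row, which is (1, 0, ..., 0)
          rw [Matrix.det_succ_row_zero]
          have hzero : ∀ j : Fin (r' + 1), j ≠ 0 →
              ((-1 : ℝ)) ^ (j : ℕ) * (Matrix.of fun i j : Fin (r' + 1) =>
                (S (row i) (col j) : ℝ)) 0 j *
                ((Matrix.of fun i j : Fin (r' + 1) => (S (row i) (col j) : ℝ)).submatrix
                  Fin.succ j.succAbove).det = 0 := by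
            intro j hj
            have hcj : 1 ≤ col j := by
              have := hcol (Fin.pos_of_ne_zero hj)
              omega
            have : S (row 0) (col j) = 0 := by rw [h0]; exact stirling_zero_pos hcj
            simp [this]
          rw [Finset.sum_eq_single 0 (fun j _ hj => hzero j hj) (by simp)]
          have h00 : (Matrix.of fun i j : Fin (r' + 1) => (S (row i) (col j) : ℝ)) 0 0 = 1 := by
            simp [Matrix.of_apply, h0, hc0, stirling_zero_zero]
          rw [h00]
          have hsub : ((Matrix.of fun i j : Fin (r' + 1) => (S (row i) (col j) : ℝ)).submatrix
              Fin.succ (Fin.succAbove 0)) =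
              Matrix.of (fun i j : Fin r' => (S (row i.succ) (col j.succ) : ℝ)) := by
            ext i j
            simp [Fin.succAbove_zero]
          rw [hsub]
          have hterm : 0 ≤ (Matrix.of fun i j : Fin r' =>
              (S (row i.succ) (col j.succ) : ℝ)).det := by
            apply ih r' (fun i => row i.succ) (fun j => col j.succ)
              (hrow.comp Fin.strictMono_succ) (hcol.comp Fin.strictMono_succ)
            have := Fin.sum_univ_succ row
            omega
          simpa using hterm
        · -- the first row is identically zero
          have hz : ∀ j, (Matrix.of fun i j : Fin (r' + 1) => (S (row i) (col j) : ℝ)) 0 j = 0 := by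
            intro j
            have hcj : 1 ≤ col j := le_trans (by omega) (hcol.monotone (Fin.zero_le j))
            simp [Matrix.of_apply, h0, stirling_zero_pos hcj]
          rw [Matrix.det_eq_zero_of_row_eq_zero 0 hz]
      · by_cases hc0 : col 0 = 0
        · -- the first column is identically zero
          have hz : ∀ i, (Matrix.of fun i j : Fin (r' + 1) => (S (row i) (col j) : ℝ)) i 0 = 0 := by
            intro i
            have hri : 1 ≤ row i := le_trans (by omega) (hrow.monotone (Fin.zero_le i))
            simp [Matrix.of_apply, hc0, stirling_pos_zero hri]
          rw [Matrix.det_eq_zero_of_column_eq_zero 0 hz]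
        · -- main case: expand using the recurrence, multilinearly in the columns
          have hrpos : ∀ i, 1 ≤ row i :=
            fun i => le_trans (by omega) (hrow.monotone (Fin.zero_le i))
          have hcpos : ∀ j, 1 ≤ col j :=
            fun j => le_trans (by omega) (hcol.monotone (Fin.zero_le j))
          set v : ℕ → (Fin (r' + 1) → ℝ) :=
            fun m i => (S (row i - 1) m : ℝ) with hv
          set g : Fin (r' + 1) → Bool → (Fin (r' + 1) → ℝ) :=
            fun j b => if b then (col j : ℝ) • v (col j) else v (col j - 1) with hg
          have htr : (Matrix.of fun i j : Fin (r' + 1) => (S (row i) (col j) : ℝ)).det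
              = (Matrix.of fun j i : Fin (r' + 1) => (S (row i) (col j) : ℝ)).det := by
            rw [← Matrix.det_transpose]
            rfl
          rw [htr]
          have hrows : (Matrix.of fun j i : Fin (r' + 1) => (S (row i) (col j) : ℝ))
              = Matrix.of (fun j => ∑ b : Bool, g j b) := by
            ext j i
            have := stirling_rec (hrpos i) (hcpos j)
            simp only [Matrix.of_apply, hg, hv, Fintype.sum_bool, if_true, if_false,
              Pi.add_apply, Pi.smul_apply, smul_eq_mul]
            rw [this]
            push_cast
            ring
          rw [hrows]
          have hdet : (Matrix.of (fun j => ∑ b : Bool, g j b)).det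
              = (Matrix.detRowAlternating (R := ℝ) (n := Fin (r' + 1))).toMultilinearMap
                  (fun j => ∑ b : Bool, g j b) := rfl
          rw [hdet, MultilinearMap.map_sum]
          apply Finset.sum_nonneg
          intro p _
          -- the summand for the choice function `p : Fin (r'+1) → Bool`
          set c : Fin (r' + 1) → ℝ := fun j => if p j then (col j : ℝ) else 1 with hc
          set m : Fin (r' + 1) → ℕ := fun j => if p j then col j else col j - 1 with hm
          have hgc : (fun j => g j (p j)) = fun j => c j • v (m j) := by
            funext j
            by_cases hpj : p j <;> simp [hg, hc, hm, hpj]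
          rw [hgc, MultilinearMap.map_smul_univ]
          have hcnn : 0 ≤ ∏ j, c j := by
            apply Finset.prod_nonneg
            intro j _
            by_cases hpj : p j <;> simp [hc, hpj] <;> positivity
          apply mul_nonneg hcnn
          -- now the determinant with rows `v (m j)`
          have hmono : Monotone m := by
            intro j j' hle
            rcases eq_or_lt_of_le hle with rfl | hlt
            · exact le_refl _
            · have h1 : col j < col j' := hcol hlt
              have h2 : m j ≤ col j := by cases hpj : p j <;> simp [hm, hpj] <;> omega
              have h3 : col j' - 1 ≤ m j' := by cases hpj : p j' <;> simp [hm, hpj] <;> omega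
              omega
          by_cases hinj : Function.Injective m
          · -- strictly increasing columns: apply the induction hypothesis
            have hsm : StrictMono m := hmono.strictMono_of_injective hinj
            have key : 0 ≤ (Matrix.of fun i j : Fin (r' + 1) =>
                (S ((fun i => row i - 1) i) (m j) : ℝ)).det := by
              apply ih (r' + 1) (fun i => row i - 1) m
                (fun i i' h => by
                  show row i - 1 < row i' - 1
                  have := hrow h; have := hrpos i; omega) hsm
              have hsum : (∑ i, (row i - 1)) + (r' + 1) = ∑ i, row i := by
                have hstep : ∀ i : Fin (r' + 1), row i - 1 + 1 = row i :=
                  fun i => by have := hrpos i; omega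
                calc (∑ i, (row i - 1)) + (r' + 1)
                    = ∑ i : Fin (r' + 1), (row i - 1 + 1) := by
                      rw [Finset.sum_add_distrib, Finset.sum_const, Finset.card_univ,
                        Fintype.card_fin, smul_eq_mul, mul_one]
                  _ = ∑ i, row i := Finset.sum_congr rfl (fun i _ => hstep i)
              omega
            have : (Matrix.detRowAlternating (R := ℝ) (n := Fin (r' + 1))).toMultilinearMap
                (fun j => v (m j))
                = (Matrix.of fun i j : Fin (r' + 1) =>
                    (S ((fun i => row i - 1) i) (m j) : ℝ)).det := by
              rw [← Matrix.det_transpose (Matrix.of fun i j : Fin (r' + 1) =>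
                (S ((fun i => row i - 1) i) (m j) : ℝ))]
              rfl
            rw [this]
            exact key
          · -- repeated column: the alternating map vanishes
            have : ∃ i j, m i = m j ∧ i ≠ j := by
              simp only [Function.Injective, not_forall] at hinj
              obtain ⟨i, j, hij, hne⟩ := hinj
              exact ⟨i, j, hij, hne⟩
            obtain ⟨i, j, hij, hne⟩ := this
            have : (Matrix.detRowAlternating (R := ℝ) (n := Fin (r' + 1))).toMultilinearMap
                (fun j => v (m j)) = 0 :=
              (Matrix.detRowAlternating (R := ℝ) (n := Fin (r' + 1))).map_eq_zero_of_eq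
                (fun j => v (m j)) (show v (m i) = v (m j) by rw [hij]) hne
            rw [this]


/-- The Stirling subset triangle `(S(n,k))_{n,k≥0}` is totally positive:
every minor, with rows `n₁ < ⋯ < n_r` and columns `k₁ < ⋯ < k_r`,
is nonnegative. -/
theorem stirlingSubset_totally_positive
    (r : ℕ) (hr : 1 ≤ r) (row col : Fin r → ℕ)
    (hrow : StrictMono row) (hcol : StrictMono col) :
    0 ≤ Matrix.det (Matrix.of fun i j : Fin r => (stirlingSubset (row i) (col j) : ℝ)) :=
  stirling_minor_nonneg (r + ∑ i, row i) r row col hrow hcol (le_refl _)
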